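/- arXiv:2206.01868 — 2 statements merged into one kernel-verified Lean document; each statement's English description precedes it below -/
import Mathlib

section
/- Let f : [0,∞) → ℝ be a C¹, increasing function with f(t) > 0 for all t > 0, and let F(t) = ∫₀^t f(k) dk. Then for all s ≥ 0: ∫₀^{2s} F(t) dt ≥ (∫₀^s √(f(t)) dt)². -/
open Set MeasureTheory intervalIntegral

theorem stmt_2 (f : ℝ → ℝ) (hf : ContDiffOn ℝ 1 f (Set.Ici 0))
    (hmono : MonotoneOn f (Set.Ici 0)) (hfpos : ∀ t > (0:ℝ), 0 < f t)
    (F : ℝ → ℝ) (hF : ∀ t, F t = ∫ k in (0:ℝ)..t, f k) :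
    ∀ s ≥ (0:ℝ),
      (∫ t in (0:ℝ)..s, Real.sqrt (f t)) ^ 2 ≤ ∫ t in (0:ℝ)..(2 * s), F t := by
  have hfc : ContinuousOn f (Set.Ici 0) := hf.continuousOn
  have hf0 : 0 ≤ f 0 := by
    have h1 : Filter.Tendsto f (nhdsWithin 0 (Set.Ioi 0)) (nhds (f 0)) :=
      (hfc 0 Set.self_mem_Ici).mono_left (nhdsWithin_mono 0 Set.Ioi_subset_Ici_self)
    exact ge_of_tendsto h1 (eventually_nhdsWithin_of_forall (fun x hx => (hfpos x hx).le))
  have hfnn : ∀ t ∈ Set.Ici (0:ℝ), 0 ≤ f t := by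
    intro t ht
    rcases eq_or_lt_of_le (Set.mem_Ici.mp ht : (0:ℝ) ≤ t) with h | h
    · exact h ▸ hf0
    · exact (hfpos t h).le
  -- interval integrability of f
  have hfi : ∀ a b : ℝ, 0 ≤ a → 0 ≤ b → IntervalIntegrable f volume a b := by
    intro a b ha hb
    refine (hfc.mono ?_).intervalIntegrable
    intro x hx
    exact le_trans (le_inf ha hb) hx.1
  -- F is monotone on Ici 0
  have hFmono : MonotoneOn F (Set.Ici 0) := by
    intro a ha b hb hab
    rw [hF a, hF b]
    have hadd : (∫ k in (0:ℝ)..a, f k) + ∫ k in a..b, f k = ∫ k in (0:ℝ)..b, f k :=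
      integral_add_adjacent_intervals (hfi 0 a le_rfl ha) (hfi a b ha hb)
    have hnn : 0 ≤ ∫ k in a..b, f k :=
      intervalIntegral.integral_nonneg hab (fun x hx => hfnn x (le_trans ha hx.1))
    linarith
  have hF0 : F 0 = 0 := by rw [hF 0, intervalIntegral.integral_same]
  have hFnn : ∀ t ∈ Set.Ici (0:ℝ), 0 ≤ F t := by
    intro t ht
    have := hFmono Set.self_mem_Ici ht ht
    linarith [hF0 ▸ this]
  intro s hs
  -- Cauchy-Schwarz: (∫₀^s √f)² ≤ s * F s
  have hFs : F s = ∫ t in Set.Ioc (0:ℝ) s, f t := by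
    rw [hF s, intervalIntegral.integral_of_le hs]
  set μ := volume.restrict (Set.Ioc (0:ℝ) s) with hμ
  haveI : IsFiniteMeasure μ := by
    constructor
    rw [hμ, Measure.restrict_apply_univ, Real.volume_Ioc]
    exact ENNReal.ofReal_lt_top
  have hIocIci : Set.Ioc (0:ℝ) s ⊆ Set.Ici 0 := fun x hx => hx.1.le
  have hsqmeas : AEStronglyMeasurable (fun t => Real.sqrt (f t)) μ :=
    ((Real.continuous_sqrt.comp_continuousOn (hfc.mono hIocIci)).aestronglyMeasurable
      measurableSet_Ioc)
  have hsqbd : ∀ᵐ x ∂μ, ‖Real.sqrt (f x)‖ ≤ Real.sqrt (f s) := by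
    refine (ae_restrict_iff' measurableSet_Ioc).2 (Filter.Eventually.of_forall ?_)
    intro x hx
    rw [Real.norm_of_nonneg (Real.sqrt_nonneg _)]
    exact Real.sqrt_le_sqrt (hmono (hIocIci hx) hs hx.2)
  have hmem : MemLp (fun t => Real.sqrt (f t)) (ENNReal.ofReal 2) μ :=
    MemLp.of_bound hsqmeas (Real.sqrt (f s)) hsqbd
  have hone : MemLp (fun _ : ℝ => (1:ℝ)) (ENNReal.ofReal 2) μ := memLp_const 1
  have hconj : Real.HolderConjugate 2 2 := Real.HolderConjugate.two_two
  have hCS := integral_mul_le_Lp_mul_Lq_of_nonneg hconj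
    (Filter.Eventually.of_forall (fun x => Real.sqrt_nonneg (f x)))
    (Filter.Eventually.of_forall (fun _ => zero_le_one)) hmem hone
  -- simplify hCS
  have e1 : ∫ a, Real.sqrt (f a) * 1 ∂μ = ∫ a, Real.sqrt (f a) ∂μ := by simp
  have e2 : ∫ a, Real.sqrt (f a) ^ (2:ℝ) ∂μ = F s := by
    rw [hFs]
    refine integral_congr_ae ((ae_restrict_iff' measurableSet_Ioc).2
      (Filter.Eventually.of_forall ?_))
    intro x hx
    show Real.sqrt (f x) ^ (2:ℝ) = f x
    rw [show ((2:ℝ)) = ((2:ℕ):ℝ) by norm_num, Real.rpow_natCast,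
      Real.sq_sqrt (hfnn x (hIocIci hx))]
  have e3 : ∫ _a, (1:ℝ) ^ (2:ℝ) ∂μ = s := by
    simp [hμ, Real.volume_Ioc, ENNReal.toReal_ofReal hs, hs]
  rw [e1, e2, e3] at hCS
  have hA : 0 ≤ ∫ a, Real.sqrt (f a) ∂μ :=
    integral_nonneg (fun x => Real.sqrt_nonneg _)
  have hFsnn : 0 ≤ F s := hFnn s hs
  have key : (∫ t in (0:ℝ)..s, Real.sqrt (f t)) ^ 2 ≤ s * F s := by
    rw [intervalIntegral.integral_of_le hs]
    calc (∫ t in Set.Ioc (0:ℝ) s, Real.sqrt (f t)) ^ 2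
        ≤ ((F s) ^ (1/2:ℝ) * s ^ (1/2:ℝ)) ^ 2 := by
          apply pow_le_pow_left₀ hA
          · simpa [hμ] using hCS
      _ = s * F s := by
          rw [mul_pow, ← Real.rpow_natCast ((F s) ^ (1/2:ℝ)) 2,
            ← Real.rpow_natCast (s ^ (1/2:ℝ)) 2,
            ← Real.rpow_mul hFsnn, ← Real.rpow_mul hs]
          norm_num
          ring
  -- F integrable on subintervals
  have hFi : ∀ a b : ℝ, 0 ≤ a → 0 ≤ b → IntervalIntegrable F volume a b := by
    intro a b ha hb
    exact (hFmono.mono (fun x hx => le_trans (le_inf ha hb) hx.1)).intervalIntegrable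
  have h2s : (0:ℝ) ≤ 2 * s := by linarith
  have step2 : s * F s ≤ ∫ t in s..(2*s), F t := by
    have hmono2 : ∫ t in s..(2*s), F s ≤ ∫ t in s..(2*s), F t := by
      apply intervalIntegral.integral_mono_on (by linarith) intervalIntegrable_const
        (hFi s (2*s) hs h2s)
      intro x hx
      exact hFmono hs (le_trans hs hx.1) hx.1
    have : ∫ t in s..(2*s), F s = s * F s := by
      rw [intervalIntegral.integral_const, smul_eq_mul]; ring
    linarith
  have step3 : (∫ t in (0:ℝ)..s, F t) + ∫ t in s..(2*s), F t = ∫ t in (0:ℝ)..(2*s), F t :=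
    integral_add_adjacent_intervals (hFi 0 s le_rfl hs) (hFi s (2*s) hs h2s)
  have step4 : 0 ≤ ∫ t in (0:ℝ)..s, F t :=
    intervalIntegral.integral_nonneg hs (fun x hx => hFnn x hx.1)
  linarith
end

section
/- Let f : [0,∞) → ℝ be C¹, increasing, with f(t) > 0 for t > 0, let F(t) = ∫₀^t f(k) dk, and let p > 0, q > 0 with 2p - q + 1 > 0. Then ∫₁^∞ ds / (∫₀^s √(f(t)) dt)^{2p/(2p-q+1)} < ∞ if and only if ∫₁^∞ ds / (∫₀^s F(t) dt)^{p/(2p-q+1)} < ∞. -/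
open Set MeasureTheory intervalIntegral

section Stmt3Aux

variable {g : ℝ → ℝ}

private lemma stmt3_intInt (hg : ContinuousOn g (Ici 0)) {a b : ℝ} (ha : 0 ≤ a) (hb : 0 ≤ b) :
    IntervalIntegrable g MeasureTheory.volume a b :=
  (hg.mono (fun x hx => (le_min ha hb).trans hx.1)).intervalIntegrable

private lemma stmt3_primitive_mono (hg : ContinuousOn g (Ici 0))
    (hnn : ∀ t ∈ Ici (0:ℝ), 0 ≤ g t) :
    MonotoneOn (fun s => ∫ t in (0:ℝ)..s, g t) (Ici 0) := by
  intro a ha b hb hab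
  have ha' : (0:ℝ) ≤ a := ha
  have hb' : (0:ℝ) ≤ b := hb
  have h1 : IntervalIntegrable g MeasureTheory.volume 0 a := stmt3_intInt hg le_rfl ha'
  have h2 : IntervalIntegrable g MeasureTheory.volume a b := stmt3_intInt hg ha' hb'
  have hadd : (∫ t in (0:ℝ)..a, g t) + (∫ t in a..b, g t) = ∫ t in (0:ℝ)..b, g t :=
    integral_add_adjacent_intervals h1 h2
  have hnn2 : 0 ≤ ∫ t in a..b, g t :=
    intervalIntegral.integral_nonneg hab (fun u hu => hnn u (ha'.trans hu.1))
  simp only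
  linarith

private lemma stmt3_primitive_nonneg (hnn : ∀ t ∈ Ici (0:ℝ), 0 ≤ g t) {s : ℝ} (hs : 0 ≤ s) :
    0 ≤ ∫ t in (0:ℝ)..s, g t :=
  intervalIntegral.integral_nonneg hs (fun u hu => hnn u hu.1)

private lemma stmt3_primitive_le (hg : ContinuousOn g (Ici 0)) (hm : MonotoneOn g (Ici 0))
    {s : ℝ} (hs : 0 ≤ s) :
    (∫ t in (0:ℝ)..s, g t) ≤ s * g s := by
  have h1 : IntervalIntegrable g MeasureTheory.volume 0 s := stmt3_intInt hg le_rfl hs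
  have h2 : (∫ t in (0:ℝ)..s, g t) ≤ ∫ t in (0:ℝ)..s, (fun _ => g s) t :=
    integral_mono_on hs h1 intervalIntegrable_const (fun x hx => hm hx.1 hs hx.2)
  simpa using h2

private lemma stmt3_le_primitive (hg : ContinuousOn g (Ici 0)) (hm : MonotoneOn g (Ici 0))
    (hnn : ∀ t ∈ Ici (0:ℝ), 0 ≤ g t) {s : ℝ} (hs : 0 ≤ s) :
    s * g s ≤ ∫ t in (0:ℝ)..(2*s), g t := by
  have h2s : (0:ℝ) ≤ 2*s := by linarith
  have hss : s ≤ 2*s := by linarith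
  have h1 : IntervalIntegrable g MeasureTheory.volume 0 s := stmt3_intInt hg le_rfl hs
  have h2 : IntervalIntegrable g MeasureTheory.volume s (2*s) := stmt3_intInt hg hs h2s
  have hadd : (∫ t in (0:ℝ)..s, g t) + (∫ t in s..(2*s), g t) = ∫ t in (0:ℝ)..(2*s), g t :=
    integral_add_adjacent_intervals h1 h2
  have hA : 0 ≤ ∫ t in (0:ℝ)..s, g t := stmt3_primitive_nonneg hnn hs
  have hB : (∫ t in s..(2*s), (fun _ => g s) t) ≤ ∫ t in s..(2*s), g t :=
    integral_mono_on hss intervalIntegrable_const h2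
      (fun x hx => hm hs (hs.trans hx.1) hx.1)
  have hC : (∫ t in s..(2*s), (fun _ => g s) t) = s * g s := by
    rw [intervalIntegral.integral_const, smul_eq_mul]; ring
  linarith

private lemma stmt3_primitive_cont (hg : ContinuousOn g (Ici 0)) :
    ContinuousOn (fun s => ∫ t in (0:ℝ)..s, g t) (Ici 0) := by
  intro x hx
  have hx0 : (0:ℝ) ≤ x := hx
  have h1 : IntervalIntegrable g MeasureTheory.volume 0 (x+1) :=
    stmt3_intInt hg le_rfl (by linarith)
  have h2 : ContinuousOn (fun b => ∫ t in (0:ℝ)..b, g t) (Set.uIcc 0 (x+1)) :=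
    intervalIntegral.continuousOn_primitive_interval' h1
      (by rw [Set.uIcc_of_le (by linarith : (0:ℝ) ≤ x+1)]; exact ⟨le_rfl, by linarith⟩)
  have hmem : Set.uIcc (0:ℝ) (x+1) ∈ nhdsWithin x (Ici 0) := by
    rw [Set.uIcc_of_le (by linarith : (0:ℝ) ≤ x+1), ← Set.Ici_inter_Iic]
    exact Filter.inter_mem self_mem_nhdsWithin
      (mem_nhdsWithin_of_mem_nhds (Iic_mem_nhds (by linarith)))
  have hxmem : x ∈ Set.uIcc (0:ℝ) (x+1) := by
    rw [Set.uIcc_of_le (by linarith : (0:ℝ) ≤ x+1)]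
    exact ⟨hx0, by linarith⟩
  exact (h2 x hxmem).mono_of_mem_nhdsWithin hmem

private lemma stmt3_inv_rpow_le {a b β : ℝ} (hβ : 0 < β) (ha : 0 < a) (hb : 0 ≤ b)
    (h : a ≤ b^2) : (b ^ (2*β))⁻¹ ≤ (a ^ β)⁻¹ := by
  have hbb : b ^ (2*β) = (b^2) ^ β := by
    rw [show (2:ℝ)*β = ((2:ℕ):ℝ)*β by norm_num, Real.rpow_mul hb, Real.rpow_natCast]
  have h1 : a ^ β ≤ b ^ (2*β) := by
    rw [hbb]; exact Real.rpow_le_rpow ha.le h hβ.le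
  exact inv_anti₀ (Real.rpow_pos_of_pos ha β) h1

private lemma stmt3_inv_rpow_le' {a b β : ℝ} (hβ : 0 < β) (hb : 0 < b)
    (h : b^2 ≤ a) : (a ^ β)⁻¹ ≤ (b ^ (2*β))⁻¹ := by
  have hbb : b ^ (2*β) = (b^2) ^ β := by
    rw [show (2:ℝ)*β = ((2:ℕ):ℝ)*β by norm_num, Real.rpow_mul hb.le, Real.rpow_natCast]
  have h1 : b ^ (2*β) ≤ a ^ β := by
    rw [hbb]; exact Real.rpow_le_rpow (by positivity) h hβ.le
  refine inv_anti₀ ?_ h1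
  rw [hbb]; exact Real.rpow_pos_of_pos (by positivity) β

private lemma stmt3_comp_aux {L R : ℝ → ℝ} {c : ℝ} (hc : 1 ≤ c)
    (hL : ContinuousOn L (Ici 1))
    (hbd : ∀ s ∈ Ici (1:ℝ), |L (c * s)| ≤ |R s|)
    (hR : IntegrableOn R (Ici 1)) : IntegrableOn L (Ici 1) := by
  have hc0 : 0 < c := lt_of_lt_of_le one_pos hc
  have hmap : Set.MapsTo (fun s => c * s) (Ici (1:ℝ)) (Ici 1) := by
    intro s hs
    have hs' : (1:ℝ) ≤ s := hs
    have : (1:ℝ) ≤ c * s := by nlinarith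
    exact this
  have hLc : ContinuousOn (fun s => L (c * s)) (Ici 1) :=
    hL.comp ((continuous_const.mul continuous_id).continuousOn) hmap
  have h1 : IntegrableOn (fun s => L (c * s)) (Ici 1) := by
    refine Integrable.mono hR (hLc.aestronglyMeasurable measurableSet_Ici) ?_
    refine (ae_restrict_iff' measurableSet_Ici).2 (Filter.Eventually.of_forall fun s hs => ?_)
    simpa [Real.norm_eq_abs] using hbd s hs
  have h2 : IntegrableOn L (Ioi c) := by
    have := (integrableOn_Ioi_comp_mul_left_iff L 1 hc0).1 (h1.mono_set Ioi_subset_Ici_self)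
    rwa [mul_one] at this
  have h3 : IntegrableOn L (Icc 1 c) :=
    (hL.mono Icc_subset_Ici_self).integrableOn_compact isCompact_Icc
  have hsub : Ici (1:ℝ) ⊆ Icc 1 c ∪ Ioi c := by
    intro x hx
    rcases le_or_gt x c with h | h
    · exact Or.inl ⟨hx, h⟩
    · exact Or.inr h
  exact (h3.union h2).mono_set hsub

end Stmt3Aux

theorem stmt_3 (f : ℝ → ℝ) (hf : ContDiffOn ℝ 1 f (Set.Ici 0))
    (hmono : MonotoneOn f (Set.Ici 0)) (hfpos : ∀ t > (0:ℝ), 0 < f t)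
    (F : ℝ → ℝ) (hF : ∀ t, F t = ∫ k in (0:ℝ)..t, f k)
    (p q : ℝ) (hp : 0 < p) (hq : 0 < q) (hpq : 0 < 2 * p - q + 1) :
    MeasureTheory.IntegrableOn
        (fun σ => ((∫ t in (0:ℝ)..σ, Real.sqrt (f t)) ^ (2 * p / (2 * p - q + 1)))⁻¹)
        (Set.Ici 1)
      ↔
    MeasureTheory.IntegrableOn
        (fun σ => ((∫ t in (0:ℝ)..σ, F t) ^ (p / (2 * p - q + 1)))⁻¹)
        (Set.Ici 1) := by
  have hFeq : F = fun t => ∫ k in (0:ℝ)..t, f k := funext hF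
  subst hFeq
  set Ff : ℝ → ℝ := fun t => ∫ k in (0:ℝ)..t, f k with hFf
  set G : ℝ → ℝ := fun s => ∫ t in (0:ℝ)..s, Real.sqrt (f t) with hG
  set H : ℝ → ℝ := fun s => ∫ t in (0:ℝ)..s, Ff t with hH
  have hfc : ContinuousOn f (Ici 0) := hf.continuousOn
  -- f is nonnegative on [0, ∞)
  have hf0 : 0 ≤ f 0 := by
    have hcw : ContinuousWithinAt f (Ici 0) 0 := hfc 0 (Set.self_mem_Ici)
    have ht : Filter.Tendsto f (nhdsWithin 0 (Ioi (0:ℝ))) (nhds (f 0)) :=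
      hcw.tendsto.mono_left (nhdsWithin_mono 0 Ioi_subset_Ici_self)
    exact ge_of_tendsto ht
      (Filter.eventually_of_mem self_mem_nhdsWithin (fun x hx => (hfpos x hx).le))
  have hfnn : ∀ t ∈ Ici (0:ℝ), 0 ≤ f t := fun t ht =>
    hf0.trans (hmono (le_refl (0:ℝ)) ht ht)
  -- sqrt ∘ f facts
  have hsq : ContinuousOn (fun t => Real.sqrt (f t)) (Ici 0) :=
    Real.continuous_sqrt.comp_continuousOn hfc
  have hsqm : MonotoneOn (fun t => Real.sqrt (f t)) (Ici 0) :=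
    fun a ha b hb hab => Real.sqrt_le_sqrt (hmono ha hb hab)
  have hsqnn : ∀ t ∈ Ici (0:ℝ), 0 ≤ Real.sqrt (f t) := fun t _ => Real.sqrt_nonneg _
  -- Ff facts
  have hFfc : ContinuousOn Ff (Ici 0) := stmt3_primitive_cont hfc
  have hFfm : MonotoneOn Ff (Ici 0) := stmt3_primitive_mono hfc hfnn
  have hFfnn : ∀ t ∈ Ici (0:ℝ), 0 ≤ Ff t := fun t ht => stmt3_primitive_nonneg hfnn ht
  -- G facts
  have hGc : ContinuousOn G (Ici 0) := stmt3_primitive_cont hsq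
  have hGm : MonotoneOn G (Ici 0) := stmt3_primitive_mono hsq hsqnn
  have hGnn : ∀ s ∈ Ici (0:ℝ), 0 ≤ G s := fun s hs => stmt3_primitive_nonneg hsqnn hs
  -- H facts
  have hHc : ContinuousOn H (Ici 0) := stmt3_primitive_cont hFfc
  have hHm : MonotoneOn H (Ici 0) := stmt3_primitive_mono hFfc hFfnn
  -- positivity
  have hGpos : ∀ s : ℝ, 1 ≤ s → 0 < G s := by
    intro s hs
    have h12 : 0 < Real.sqrt (f (1/2)) := Real.sqrt_pos.2 (hfpos _ (by norm_num))
    have h1 : (1/2 : ℝ) * Real.sqrt (f (1/2)) ≤ G (2 * (1/2)) :=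
      stmt3_le_primitive hsq hsqm hsqnn (by norm_num)
    rw [show (2:ℝ) * (1/2) = 1 by norm_num] at h1
    have h2 : G 1 ≤ G s := hGm (by norm_num) (by simp only [mem_Ici]; linarith) hs
    nlinarith
  have hFfpos : ∀ t : ℝ, 0 < t → 0 < Ff t := by
    intro t ht
    have h1 : (t/2) * f (t/2) ≤ Ff (2 * (t/2)) :=
      stmt3_le_primitive hfc hmono hfnn (by linarith)
    rw [show (2:ℝ) * (t/2) = t by ring] at h1
    have h2 : 0 < f (t/2) := hfpos _ (by linarith)
    nlinarith
  have hHpos : ∀ s : ℝ, 1 ≤ s → 0 < H s := by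
    intro s hs
    have h1 : (1/2 : ℝ) * Ff (1/2) ≤ H (2 * (1/2)) :=
      stmt3_le_primitive hFfc hFfm hFfnn (by norm_num)
    rw [show (2:ℝ) * (1/2) = 1 by norm_num] at h1
    have h2 : H 1 ≤ H s := hHm (by norm_num) (by simp only [mem_Ici]; linarith) hs
    have h3 : 0 < Ff (1/2) := hFfpos _ (by norm_num)
    nlinarith
  -- key inequality 1 : H s ≤ (G (2s))²
  have key1 : ∀ s : ℝ, 0 ≤ s → H s ≤ (G (2*s))^2 := by
    intro s hs
    have e1 : H s ≤ s * Ff s := stmt3_primitive_le hFfc hFfm hs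
    have e2 : Ff s ≤ s * f s := stmt3_primitive_le hfc hmono hs
    have e3 : s * Real.sqrt (f s) ≤ G (2*s) := stmt3_le_primitive hsq hsqm hsqnn hs
    have e4 : Real.sqrt (f s) ^ 2 = f s := Real.sq_sqrt (hfnn s hs)
    have e5 : 0 ≤ s * Real.sqrt (f s) := mul_nonneg hs (Real.sqrt_nonneg _)
    have e6 : (s * Real.sqrt (f s))^2 ≤ (G (2*s))^2 := by
      apply pow_le_pow_left₀ e5 e3
    have e7 : (s * Real.sqrt (f s))^2 = s^2 * f s := by rw [mul_pow, e4]
    have e8 : s * Ff s ≤ s * (s * f s) := mul_le_mul_of_nonneg_left e2 hs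
    nlinarith
  -- key inequality 2 : (G s)² ≤ H (4s)
  have key2 : ∀ s : ℝ, 0 ≤ s → (G s)^2 ≤ H (4*s) := by
    intro s hs
    have e1 : G s ≤ s * Real.sqrt (f s) := stmt3_primitive_le hsq hsqm hs
    have e4 : Real.sqrt (f s) ^ 2 = f s := Real.sq_sqrt (hfnn s hs)
    have e2 : (G s)^2 ≤ s^2 * f s := by
      have := pow_le_pow_left₀ (hGnn s hs) e1 2
      rw [mul_pow, e4] at this; exact this
    have e3 : s * f s ≤ Ff (2*s) := stmt3_le_primitive hfc hmono hfnn hs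
    have e5 : (2*s) * Ff (2*s) ≤ H (2*(2*s)) :=
      stmt3_le_primitive hFfc hFfm hFfnn (by linarith)
    rw [show (2:ℝ)*(2*s) = 4*s by ring] at e5
    have e6 : (2*s) * (s * f s) ≤ (2*s) * Ff (2*s) :=
      mul_le_mul_of_nonneg_left e3 (by linarith)
    have e7 : 0 ≤ s^2 * f s := mul_nonneg (sq_nonneg s) (hfnn s hs)
    nlinarith
  -- setup exponents
  set β := p / (2 * p - q + 1) with hβdef
  have hβ : 0 < β := div_pos hp hpq
  have heq : 2 * p / (2 * p - q + 1) = 2 * β := by rw [hβdef, mul_div_assoc]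
  rw [heq]
  -- continuity of the two integrands on Ici 1
  have hsub1 : Ici (1:ℝ) ⊆ Ici 0 := fun x hx => Set.mem_Ici.2 (le_trans zero_le_one (Set.mem_Ici.1 hx))
  have hLc : ContinuousOn (fun σ => ((G σ) ^ (2*β))⁻¹) (Ici 1) := by
    refine ContinuousOn.inv₀ ((hGc.mono hsub1).rpow_const ?_) ?_
    · exact fun x hx => Or.inl (hGpos x hx).ne'
    · exact fun x hx => (Real.rpow_pos_of_pos (hGpos x hx) _).ne'
  have hRc : ContinuousOn (fun σ => ((H σ) ^ β)⁻¹) (Ici 1) := by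
    refine ContinuousOn.inv₀ ((hHc.mono hsub1).rpow_const ?_) ?_
    · exact fun x hx => Or.inl (hHpos x hx).ne'
    · exact fun x hx => (Real.rpow_pos_of_pos (hHpos x hx) _).ne'
  constructor
  · -- G-side integrable → H-side integrable, using R (4s) ≤ L s
    intro hInt
    refine stmt3_comp_aux (by norm_num : (1:ℝ) ≤ 4) hRc (fun s hs => ?_) hInt
    have hs1 : (1:ℝ) ≤ s := hs
    have h0 : ((H (4*s)) ^ β)⁻¹ ≤ ((G s) ^ (2*β))⁻¹ :=
      stmt3_inv_rpow_le' hβ (hGpos s hs1) (key2 s (by linarith))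
    have hA : 0 ≤ ((H (4*s)) ^ β)⁻¹ :=
      inv_nonneg.2 (Real.rpow_nonneg (le_of_lt (hHpos _ (by linarith))) _)
    have hB : 0 ≤ ((G s) ^ (2*β))⁻¹ :=
      inv_nonneg.2 (Real.rpow_nonneg (le_of_lt (hGpos s hs1)) _)
    rw [abs_of_nonneg hA, abs_of_nonneg hB]
    exact h0
  · -- H-side integrable → G-side integrable, using L (2s) ≤ R s
    intro hInt
    refine stmt3_comp_aux (by norm_num : (1:ℝ) ≤ 2) hLc (fun s hs => ?_) hInt
    have hs1 : (1:ℝ) ≤ s := hs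
    have h0 : ((G (2*s)) ^ (2*β))⁻¹ ≤ ((H s) ^ β)⁻¹ :=
      stmt3_inv_rpow_le hβ (hHpos s hs1) (hGnn _ (by simp only [mem_Ici]; linarith))
        (key1 s (by linarith))
    have hA : 0 ≤ ((G (2*s)) ^ (2*β))⁻¹ :=
      inv_nonneg.2 (Real.rpow_nonneg (hGnn _ (by simp only [mem_Ici]; linarith)) _)
    have hB : 0 ≤ ((H s) ^ β)⁻¹ :=
      inv_nonneg.2 (Real.rpow_nonneg (le_of_lt (hHpos s hs1)) _)
    rw [abs_of_nonneg hA, abs_of_nonneg hB]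
    exact h0
end
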